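/- If t̄ ∈ relint(C), then for every λ ≥ 0 the norm-penalized KLIEP loss ℓ_λ(Δ) = ℓ(Δ) + λ·N(Δ) attains a global minimum, i.e., there exists Δ₀ ∈ ℝ^k with ℓ_λ(Δ₀) ≤ ℓ_λ(Δ) for all Δ ∈ ℝ^k. (Theorem 2(i).) -/

import Mathlib

open scoped RealInnerProductSpace

/-- The empirical KLIEP loss
`ℓ(Δ) = -⟪Δ, t̄⟫ + log((1/n) ∑_j exp ⟪Δ, t_j⟫)`. -/
noncomputable def kliepLoss {k n : ℕ} (tbar : EuclideanSpace ℝ (Fin k))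
    (t : Fin n → EuclideanSpace ℝ (Fin k)) (Δ : EuclideanSpace ℝ (Fin k)) : ℝ :=
  -⟪Δ, tbar⟫ + Real.log ((1 / (n : ℝ)) * ∑ j, Real.exp ⟪Δ, t j⟫)


open Filter


private lemma aux_continuous_sup' {X ι : Type*} [TopologicalSpace X] {s : Finset ι}
    (H : s.Nonempty) {f : ι → X → ℝ} (hf : ∀ i, Continuous (f i)) :
    Continuous fun x => s.sup' H (fun i => f i x) := by
  induction H using Finset.Nonempty.cons_induction with
  | singleton a => simp only [Finset.sup'_singleton]; exact hf a
  | cons a s ha hs ih =>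
      have he : ∀ x, (Finset.cons a s ha).sup' (Finset.cons_nonempty ha) (fun i => f i x)
          = max (f a x) (s.sup' hs fun i => f i x) := fun x => Finset.sup'_cons hs (fun i => f i x)
      simp only [he]
      exact (hf a).max ih

private lemma aux_N_sum {E ι : Type*} [AddCommGroup E] {N : E → ℝ} (h0 : N 0 = 0)
    (hadd : ∀ x y, N (x + y) ≤ N x + N y) (s : Finset ι) (f : ι → E) :
    N (∑ i ∈ s, f i) ≤ ∑ i ∈ s, N (f i) := by
  classical
  induction s using Finset.induction with
  | empty => simp [h0]
  | insert _ _ hx ih =>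
      rw [Finset.sum_insert hx, Finset.sum_insert hx]
      exact (hadd _ _).trans (by linarith)

section Nfacts

variable {k : ℕ} {N : EuclideanSpace ℝ (Fin k) → ℝ}

private lemma aux_N_zero (hN_smul : ∀ (c : ℝ) (x), N (c • x) = |c| * N x) : N 0 = 0 := by
  have := hN_smul 0 0; simpa using this

private lemma aux_N_nonneg (hN_add : ∀ x y, N (x + y) ≤ N x + N y)
    (hN_smul : ∀ (c : ℝ) (x), N (c • x) = |c| * N x) (x : EuclideanSpace ℝ (Fin k)) :
    0 ≤ N x := by
  have h1 : N 0 ≤ N x + N (-x) := by simpa using hN_add x (-x)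
  have h2 : N (-x) = N x := by simpa using hN_smul (-1) x
  have h0 := aux_N_zero hN_smul
  linarith

private lemma aux_N_upper (hN_add : ∀ x y, N (x + y) ≤ N x + N y)
    (hN_smul : ∀ (c : ℝ) (x), N (c • x) = |c| * N x) :
    ∃ C : ℝ, 0 ≤ C ∧ ∀ x, N x ≤ C * ‖x‖ := by
  set C : ℝ := ∑ i, N (EuclideanSpace.single i (1:ℝ)) with hC
  have hCnn : 0 ≤ C := Finset.sum_nonneg fun i _ => aux_N_nonneg hN_add hN_smul _
  refine ⟨C, hCnn, fun x => ?_⟩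
  have hrep : ∑ i, x i • EuclideanSpace.single i (1:ℝ) = x := by
    have := (EuclideanSpace.basisFun (Fin k) ℝ).sum_repr x
    simpa [EuclideanSpace.basisFun_repr, EuclideanSpace.basisFun_apply] using this
  have habs : ∀ i, |x i| ≤ ‖x‖ := by
    intro i
    have h1 : ⟪EuclideanSpace.single i (1:ℝ), x⟫ = x i := by
      simp [EuclideanSpace.inner_single_left]
    have h2 := abs_real_inner_le_norm (EuclideanSpace.single i (1:ℝ)) x
    rw [h1, EuclideanSpace.norm_single] at h2
    simpa using h2
  calc N x = N (∑ i, x i • EuclideanSpace.single i (1:ℝ)) := by rw [hrep]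
    _ ≤ ∑ i, N (x i • EuclideanSpace.single i (1:ℝ)) :=
        aux_N_sum (aux_N_zero hN_smul) hN_add _ _
    _ = ∑ i, |x i| * N (EuclideanSpace.single i (1:ℝ)) := by simp [hN_smul]
    _ ≤ ∑ i, ‖x‖ * N (EuclideanSpace.single i (1:ℝ)) :=
        Finset.sum_le_sum fun i _ =>
          mul_le_mul_of_nonneg_right (habs i) (aux_N_nonneg hN_add hN_smul _)
    _ = C * ‖x‖ := by rw [← Finset.mul_sum, mul_comm]

private lemma aux_N_continuous (hN_add : ∀ x y, N (x + y) ≤ N x + N y)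
    (hN_smul : ∀ (c : ℝ) (x), N (c • x) = |c| * N x) : Continuous N := by
  obtain ⟨C, hCnn, hub⟩ := aux_N_upper hN_add hN_smul
  have hneg : ∀ x, N (-x) = N x := fun x => by simpa using hN_smul (-1) x
  have hlip : LipschitzWith (Real.toNNReal C) N := by
    apply LipschitzWith.of_dist_le_mul
    intro x y
    rw [Real.dist_eq, dist_eq_norm, Real.coe_toNNReal C hCnn]
    have h1 : N x - N y ≤ N (x - y) := by
      have := hN_add (x - y) y; simp only [sub_add_cancel] at this; linarith
    have h2 : N y - N x ≤ N (x - y) := by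
      have := hN_add (y - x) x; simp only [sub_add_cancel] at this
      have h3 : N (y - x) = N (x - y) := by rw [← neg_sub x y, hneg]
      linarith
    have := hub (x - y)
    rw [abs_sub_le_iff]
    exact ⟨h1.trans this, h2.trans this⟩
  exact hlip.continuous

private lemma aux_N_lower (hk : 1 ≤ k) (hN_add : ∀ x y, N (x + y) ≤ N x + N y)
    (hN_smul : ∀ (c : ℝ) (x), N (c • x) = |c| * N x)
    (hN_zero : ∀ x, N x = 0 ↔ x = 0) :
    ∃ c : ℝ, 0 < c ∧ ∀ x, c * ‖x‖ ≤ N x := by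
  haveI : Nonempty (Fin k) := ⟨⟨0, hk⟩⟩
  have hne : (Metric.sphere (0 : EuclideanSpace ℝ (Fin k)) 1).Nonempty :=
    NormedSpace.sphere_nonempty.mpr zero_le_one
  obtain ⟨u, huS, humin⟩ := (isCompact_sphere (0 : EuclideanSpace ℝ (Fin k)) 1).exists_isMinOn
    hne (aux_N_continuous hN_add hN_smul).continuousOn
  have hu1 : ‖u‖ = 1 := mem_sphere_zero_iff_norm.mp huS
  have hu0 : u ≠ 0 := fun h => by simp [h] at hu1
  have hc : 0 < N u := lt_of_le_of_ne (aux_N_nonneg hN_add hN_smul u)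
    (fun h => hu0 ((hN_zero u).mp h.symm))
  refine ⟨N u, hc, fun x => ?_⟩
  rcases eq_or_ne x 0 with rfl | hx
  · simp [aux_N_zero hN_smul]
  · set u' : EuclideanSpace ℝ (Fin k) := ‖x‖⁻¹ • x with hu'
    have hu'S : u' ∈ Metric.sphere (0 : EuclideanSpace ℝ (Fin k)) 1 :=
      mem_sphere_zero_iff_norm.mpr (norm_smul_inv_norm hx)
    have hxu : x = ‖x‖ • u' := by
      rw [hu', smul_inv_smul₀ (norm_ne_zero_iff.mpr hx)]
    have : N x = ‖x‖ * N u' := by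
      conv_lhs => rw [hxu]
      rw [hN_smul, abs_of_nonneg (norm_nonneg x)]
    calc N u * ‖x‖ ≤ N u' * ‖x‖ :=
          mul_le_mul_of_nonneg_right (humin hu'S) (norm_nonneg x)
      _ = N x := by rw [this]; ring
  
end Nfacts

section Kliep

variable {k n : ℕ} (tbar : EuclideanSpace ℝ (Fin k)) (t : Fin n → EuclideanSpace ℝ (Fin k))

private lemma aux_sum_pos (hn : 1 ≤ n) (Δ : EuclideanSpace ℝ (Fin k)) :
    0 < (1 / (n : ℝ)) * ∑ j, Real.exp ⟪Δ, t j⟫ := by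
  haveI : Nonempty (Fin n) := ⟨⟨0, hn⟩⟩
  have hn0 : (0:ℝ) < n := by exact_mod_cast hn
  exact mul_pos (by positivity)
    (Finset.sum_pos (fun j _ => Real.exp_pos _) Finset.univ_nonempty)

private lemma aux_kliep_continuous (hn : 1 ≤ n) : Continuous (kliepLoss tbar t) := by
  have hinner : ∀ c : EuclideanSpace ℝ (Fin k),
      Continuous fun Δ : EuclideanSpace ℝ (Fin k) => (⟪Δ, c⟫ : ℝ) := fun c =>
    continuous_id.inner continuous_const
  unfold kliepLoss
  apply Continuous.add
  · exact (hinner tbar).neg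
  · apply Continuous.log
    · apply continuous_const.mul
      apply continuous_finset_sum
      intro j _
      exact Real.continuous_exp.comp (hinner (t j))
    · exact fun Δ => (aux_sum_pos t hn Δ).ne'

private lemma aux_kliep_lb (hn : 1 ≤ n) (Δ : EuclideanSpace ℝ (Fin k)) (j : Fin n) :
    ⟪Δ, t j⟫ - ⟪Δ, tbar⟫ - Real.log n ≤ kliepLoss tbar t Δ := by
  have hn0 : (0:ℝ) < n := by exact_mod_cast hn
  have h1 : Real.exp ⟪Δ, t j⟫ ≤ ∑ i, Real.exp ⟪Δ, t i⟫ :=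
    Finset.single_le_sum (f := fun i => Real.exp ⟪Δ, t i⟫) (fun i _ => (Real.exp_pos _).le) (Finset.mem_univ j)
  have h2 : (1/(n:ℝ)) * Real.exp ⟪Δ, t j⟫ ≤ (1/(n:ℝ)) * ∑ i, Real.exp ⟪Δ, t i⟫ :=
    mul_le_mul_of_nonneg_left h1 (by positivity)
  have h3 : Real.log ((1/(n:ℝ)) * Real.exp ⟪Δ, t j⟫)
      ≤ Real.log ((1/(n:ℝ)) * ∑ i, Real.exp ⟪Δ, t i⟫) :=
    Real.log_le_log (by positivity) h2
  have h4 : Real.log ((1/(n:ℝ)) * Real.exp ⟪Δ, t j⟫) = -Real.log n + ⟪Δ, t j⟫ := by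
    rw [Real.log_mul (by positivity) (Real.exp_ne_zero _), Real.log_exp, one_div,
      Real.log_inv]
  unfold kliepLoss
  rw [h4] at h3
  linarith

private lemma aux_exists_le (htbar : tbar ∈ convexHull ℝ (Set.range t)) (hn : 1 ≤ n)
    (Δ : EuclideanSpace ℝ (Fin k)) : ∃ j, ⟪Δ, tbar⟫ ≤ ⟪Δ, t j⟫ := by
  haveI : Nonempty (Fin n) := ⟨⟨0, hn⟩⟩
  have hne : (Finset.univ : Finset (Fin n)).Nonempty := Finset.univ_nonempty
  set M : ℝ := Finset.univ.sup' hne (fun j => ⟪Δ, t j⟫) with hM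
  obtain ⟨j, _, hj⟩ := Finset.exists_mem_eq_sup' hne (fun j => ⟪Δ, t j⟫)
  refine ⟨j, ?_⟩
  rw [← hj, ← hM]
  have hconv : convexHull ℝ (Set.range t) ⊆ {y | ⟪Δ, y⟫ ≤ M} := by
    apply convexHull_min
    · rintro y ⟨i, rfl⟩
      exact Finset.le_sup' (fun j => ⟪Δ, t j⟫) (Finset.mem_univ i)
    · exact convex_halfSpace_le
        ⟨fun a b => inner_add_right _ _ _, fun c x => real_inner_smul_right _ _ _⟩ M
  exact hconv htbar

end Kliep

/-- Theorem 2(i): if `t̄ ∈ relint(C)`, then for every `λ ≥ 0` the norm-penalized KLIEP loss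
`ℓ(Δ) + λ·N(Δ)` attains a global minimum. -/
theorem penalized_kliep_attains_min_of_relint {k n : ℕ} (hk : 1 ≤ k) (hn : 1 ≤ n)
    (tbar : EuclideanSpace ℝ (Fin k)) (t : Fin n → EuclideanSpace ℝ (Fin k))
    (N : EuclideanSpace ℝ (Fin k) → ℝ)
    (hN_add : ∀ x y, N (x + y) ≤ N x + N y)
    (hN_smul : ∀ (c : ℝ) (x), N (c • x) = |c| * N x)
    (hN_zero : ∀ x, N x = 0 ↔ x = 0)
    (hmem : tbar ∈ intrinsicInterior ℝ (convexHull ℝ (Set.range t))) :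
    ∀ lam : ℝ, 0 ≤ lam →
      ∃ Δ₀ : EuclideanSpace ℝ (Fin k), ∀ Δ : EuclideanSpace ℝ (Fin k),
        kliepLoss tbar t Δ₀ + lam * N Δ₀ ≤ kliepLoss tbar t Δ + lam * N Δ := by
  intro lam hlam
  haveI : Nonempty (Fin n) := ⟨⟨0, hn⟩⟩
  have htbarC : tbar ∈ convexHull ℝ (Set.range t) := intrinsicInterior_subset hmem
  have hbound : ∀ Δ, -Real.log n ≤ kliepLoss tbar t Δ := by
    intro Δ
    obtain ⟨j, hj⟩ := aux_exists_le tbar t htbarC hn Δ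
    have := aux_kliep_lb tbar t hn Δ j
    linarith
  rcases hlam.eq_or_lt with heq | hpos
  -- Case lam > 0 second; handle lam = 0 first.
  case inr =>
    -- lam > 0 : coercive on the whole space
    obtain ⟨c, hc, hlow⟩ := aux_N_lower hk hN_add hN_smul hN_zero
    have hNc := aux_N_continuous hN_add hN_smul
    have hfc : Continuous (fun Δ => kliepLoss tbar t Δ + lam * N Δ) :=
      (aux_kliep_continuous tbar t hn).add (continuous_const.mul hNc)
    have hcoerc : ∀ Δ, -Real.log n + (lam * c) * ‖Δ‖ ≤ kliepLoss tbar t Δ + lam * N Δ := by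
      intro Δ
      have h1 := hbound Δ
      have h2 : lam * (c * ‖Δ‖) ≤ lam * N Δ :=
        mul_le_mul_of_nonneg_left (hlow Δ) hpos.le
      nlinarith
    have htend : Filter.Tendsto (fun Δ => kliepLoss tbar t Δ + lam * N Δ)
        (Filter.cocompact _) Filter.atTop := by
      apply Filter.tendsto_atTop_mono hcoerc
      apply Filter.tendsto_atTop_add_const_left
      exact tendsto_norm_cocompact_atTop.const_mul_atTop (by positivity)
    exact hfc.exists_forall_le htend
  case inl =>
    -- lam = 0
    subst heq
    simp only [zero_mul, add_zero]
    set V : Submodule ℝ (EuclideanSpace ℝ (Fin k)) := vectorSpan ℝ (Set.range t) with hVdef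
    have hsubV : ∀ j, t j - tbar ∈ V := by
      intro j
      have h1 : t j ∈ affineSpan ℝ (Set.range t) := mem_affineSpan ℝ (Set.mem_range_self j)
      have h2 : tbar ∈ affineSpan ℝ (Set.range t) := convexHull_subset_affineSpan _ htbarC
      have h3 := AffineSubspace.vsub_mem_direction h1 h2
      rw [direction_affineSpan] at h3
      simpa [vsub_eq_sub] using h3
    by_cases hV : V = ⊥
    · -- degenerate case : all t j equal tbar, loss is constant 0
      have hteq : ∀ j, t j = tbar := by
        intro j
        have := hsubV j
        rw [hV, Submodule.mem_bot] at this
        exact sub_eq_zero.mp this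
      have hconst : ∀ Δ, kliepLoss tbar t Δ = 0 := by
        intro Δ
        have hn0 : ((n:ℝ)) ≠ 0 := by positivity
        unfold kliepLoss
        simp only [hteq]
        rw [Finset.sum_const, Finset.card_univ, Fintype.card_fin, nsmul_eq_mul]
        rw [show (1/(n:ℝ)) * ((n:ℝ) * Real.exp ⟪Δ, tbar⟫) = Real.exp ⟪Δ, tbar⟫ by
          field_simp]
        rw [Real.log_exp]
        ring
      exact ⟨0, fun Δ => by rw [hconst, hconst]⟩
    · -- nondegenerate case
      haveI : Nontrivial ↥V := Submodule.nontrivial_iff_ne_bot.mpr hV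
      -- the orthogonal projection onto V
      set P := V.orthogonalProjectionOnto with hP
      have hdecomp : ∀ Δ, kliepLoss tbar t Δ = kliepLoss tbar t ↑(P Δ) := by
        intro Δ
        have hqV : Δ - ↑(P Δ) ∈ Vᗮ := V.sub_starProjection_mem_orthogonal Δ
        have hq0 : ∀ j, ⟪Δ - ↑(P Δ), t j⟫ = ⟪Δ - ↑(P Δ), tbar⟫ := by
          intro j
          have h0 : ⟪t j - tbar, Δ - ↑(P Δ)⟫ = (0:ℝ) :=
            Submodule.inner_right_of_mem_orthogonal (hsubV j) hqV
          have h0' : ⟪Δ - ↑(P Δ), t j - tbar⟫ = (0:ℝ) := by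
            rw [real_inner_comm]; exact h0
          rw [inner_sub_right] at h0'
          linarith
        have hkey : ∀ x, ⟪Δ, x⟫ = ⟪(↑(P Δ) : EuclideanSpace ℝ (Fin k)), x⟫
            + ⟪Δ - ↑(P Δ), x⟫ := by
          intro x
          rw [inner_sub_left]
          ring
        have hsum : ∑ j, Real.exp ⟪Δ, t j⟫
            = Real.exp ⟪Δ - ↑(P Δ), tbar⟫ * ∑ j, Real.exp ⟪(↑(P Δ) : EuclideanSpace ℝ (Fin k)), t j⟫ := by
          rw [Finset.mul_sum]
          apply Finset.sum_congr rfl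
          intro j _
          rw [hkey (t j), hq0 j, ← Real.exp_add]
          ring_nf
        unfold kliepLoss
        rw [hsum, hkey tbar,
          show (1/(n:ℝ)) * (Real.exp ⟪Δ - ↑(P Δ), tbar⟫ * ∑ j, Real.exp ⟪(↑(P Δ) : EuclideanSpace ℝ (Fin k)), t j⟫)
            = Real.exp ⟪Δ - ↑(P Δ), tbar⟫ * ((1/(n:ℝ)) * ∑ j, Real.exp ⟪(↑(P Δ) : EuclideanSpace ℝ (Fin k)), t j⟫) by ring,
          Real.log_mul (Real.exp_ne_zero _) (aux_sum_pos t hn _).ne', Real.log_exp]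
        ring
      -- extract a ball from the relative interior hypothesis
      obtain ⟨y, hy_int, hy_eq⟩ := hmem
      rw [mem_interior_iff_mem_nhds] at hy_int
      obtain ⟨ε₀, hε₀, hball⟩ := Metric.mem_nhds_iff.mp hy_int
      have hpush : ∀ u : EuclideanSpace ℝ (Fin k), u ∈ V → ‖u‖ = 1 →
          tbar + (ε₀/2) • u ∈ convexHull ℝ (Set.range t) := by
        intro u huV hu1
        have hdir : u ∈ (affineSpan ℝ (convexHull ℝ (Set.range t))).direction := by
          rw [direction_affineSpan]
          exact vectorSpan_mono ℝ (subset_convexHull ℝ _) huV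
        have htbar_aff : tbar ∈ affineSpan ℝ (convexHull ℝ (Set.range t)) :=
          subset_affineSpan ℝ _ htbarC
        have hz : ((ε₀/2) • u) +ᵥ tbar ∈ affineSpan ℝ (convexHull ℝ (Set.range t)) :=
          AffineSubspace.vadd_mem_of_mem_direction (Submodule.smul_mem _ _ hdir) htbar_aff
        have hmemball : (⟨((ε₀/2) • u) +ᵥ tbar, hz⟩ :
            affineSpan ℝ (convexHull ℝ (Set.range t))) ∈ Metric.ball y ε₀ := by
          rw [Metric.mem_ball, Subtype.dist_eq, hy_eq]
          simp only [vadd_eq_add]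
          rw [dist_eq_norm, add_sub_cancel_right, norm_smul, hu1]
          rw [Real.norm_eq_abs, abs_of_pos (show (0:ℝ) < ε₀/2 by linarith)]
          linarith
        have := hball hmemball
        simpa [vadd_eq_add, add_comm] using this
      have hposdir : ∀ u : EuclideanSpace ℝ (Fin k), u ∈ V → ‖u‖ = 1 →
          ∃ j, 0 < ⟪u, t j - tbar⟫ := by
        intro u huV hu1
        by_contra hcon
        push_neg at hcon
        have hhalf : convexHull ℝ (Set.range t) ⊆ {z | ⟪u, z⟫ ≤ ⟪u, tbar⟫} := by
          apply convexHull_min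
          · rintro z ⟨j, rfl⟩
            have := hcon j
            rw [inner_sub_right] at this
            simpa using this
          · exact convex_halfSpace_le
              ⟨fun a b => inner_add_right _ _ _, fun c x => real_inner_smul_right _ _ _⟩ _
        have h1 := hhalf (hpush u huV hu1)
        rw [Set.mem_setOf_eq, inner_add_right, real_inner_smul_right] at h1
        have h2 : ⟪u, u⟫ = (1:ℝ) := by
          rw [real_inner_self_eq_norm_mul_norm, hu1]; ring
        rw [h2] at h1
        linarith
      -- minimum of the directional gap on the unit sphere of V
      have hneS : (Metric.sphere (0 : ↥V) 1).Nonempty :=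
        NormedSpace.sphere_nonempty.mpr zero_le_one
      have hneF : (Finset.univ : Finset (Fin n)).Nonempty := Finset.univ_nonempty
      have hgc : Continuous fun x : ↥V =>
          Finset.univ.sup' hneF (fun j => ⟪(x : EuclideanSpace ℝ (Fin k)), t j - tbar⟫) :=
        aux_continuous_sup' hneF (fun j => continuous_subtype_val.inner continuous_const)
      obtain ⟨u₀, hu₀S, hu₀min⟩ := (isCompact_sphere (0:↥V) 1).exists_isMinOn hneS
        hgc.continuousOn
      have hu₀1 : ‖(u₀ : EuclideanSpace ℝ (Fin k))‖ = 1 := by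
        have := mem_sphere_zero_iff_norm.mp hu₀S
        simpa using this
      set ε : ℝ := Finset.univ.sup' hneF (fun j => ⟪(u₀ : EuclideanSpace ℝ (Fin k)), t j - tbar⟫)
        with hεdef
      have hεpos : 0 < ε := by
        obtain ⟨j, hj⟩ := hposdir ↑u₀ u₀.2 hu₀1
        have hle := Finset.le_sup'
          (fun j => ⟪(u₀ : EuclideanSpace ℝ (Fin k)), t j - tbar⟫) (Finset.mem_univ j)
        exact lt_of_lt_of_le hj (by rw [hεdef]; exact hle)
      -- coercivity of the loss on V
      have hcoerc : ∀ x : ↥V, -Real.log n + ε * ‖x‖ ≤ kliepLoss tbar t ↑x := by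
        intro x
        rcases eq_or_ne x 0 with rfl | hx
        · simpa using hbound 0
        · have hx' : (x : EuclideanSpace ℝ (Fin k)) ≠ 0 := by
            simpa [Submodule.coe_eq_zero] using hx
          have hr : (0:ℝ) < ‖(x : EuclideanSpace ℝ (Fin k))‖ := norm_pos_iff.mpr hx'
          set u : ↥V := ‖(x : EuclideanSpace ℝ (Fin k))‖⁻¹ • x with hudef
          have huS : u ∈ Metric.sphere (0 : ↥V) 1 := by
            rw [mem_sphere_zero_iff_norm]
            have : ‖(u : EuclideanSpace ℝ (Fin k))‖ = 1 := by
              rw [hudef]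
              push_cast
              exact norm_smul_inv_norm hx'
            simpa using this
          have h1 : ε ≤ Finset.univ.sup' hneF
              (fun j => ⟪(u : EuclideanSpace ℝ (Fin k)), t j - tbar⟫) := hu₀min huS
          obtain ⟨j, _, hj⟩ := Finset.exists_mem_eq_sup' hneF
            (fun j => ⟪(u : EuclideanSpace ℝ (Fin k)), t j - tbar⟫)
          have h2 : ε ≤ ⟪(u : EuclideanSpace ℝ (Fin k)), t j - tbar⟫ := by
            rw [← hj]; exact h1
          have hxu : (x : EuclideanSpace ℝ (Fin k))
              = ‖(x : EuclideanSpace ℝ (Fin k))‖ • (u : EuclideanSpace ℝ (Fin k)) := by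
            rw [hudef]
            push_cast
            rw [smul_inv_smul₀ hr.ne']
          have h3 : ε * ‖(x : EuclideanSpace ℝ (Fin k))‖
              ≤ ⟪(x : EuclideanSpace ℝ (Fin k)), t j - tbar⟫ := by
            conv_rhs => rw [hxu]
            rw [real_inner_smul_left]
            rw [mul_comm]
            exact mul_le_mul_of_nonneg_left h2 hr.le
          have h4 := aux_kliep_lb tbar t hn ↑x j
          rw [inner_sub_right] at h3
          have hnx : ‖x‖ = ‖(x : EuclideanSpace ℝ (Fin k))‖ := rfl
          rw [hnx]
          linarith
      -- conclude : minimize over V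
      have hVc : Continuous (fun x : ↥V => kliepLoss tbar t ↑x) :=
        (aux_kliep_continuous tbar t hn).comp continuous_subtype_val
      have htend : Filter.Tendsto (fun x : ↥V => kliepLoss tbar t ↑x)
          (Filter.cocompact ↥V) Filter.atTop := by
        apply Filter.tendsto_atTop_mono hcoerc
        apply Filter.tendsto_atTop_add_const_left
        exact tendsto_norm_cocompact_atTop.const_mul_atTop hεpos
      haveI : Nonempty ↥V := ⟨0⟩
      obtain ⟨x₀, hx₀⟩ := hVc.exists_forall_le htend
      refine ⟨↑x₀, fun Δ => ?_⟩
      calc kliepLoss tbar t ↑x₀ ≤ kliepLoss tbar t ↑(P Δ) := hx₀ (P Δ)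
        _ = kliepLoss tbar t Δ := (hdecomp Δ).symm
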